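/- Let p ≥ 2, t ≥ 0 and 1 ≤ b ≤ p-1 be integers and let e = ⟨t,t+1;b⟩. If e' ∈ ℤ^{p-1} satisfies Σ_{i=1}^{p-1} e'_i = (p-1)t + b, then Q(e') ≤ Q(e), with equality if and only if e' is obtained from e by permuting its coordinates. -/

import Mathlib

open Finset

/-- The quadratic form `Q` on `ℚ^{p-1}`, the intersection form of
`H₂(C_p, ∂C_p; ℚ)` in the basis `δ_1,…,δ_{p-1}`. -/
def Qform (p : ℕ) (x : Fin (p-1) → ℚ) : ℚ :=
  -(((p : ℚ)^2 - p - 1) / (p : ℚ)^2) * ∑ i, (x i)^2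
    + (2 * ((p : ℚ) + 1) / (p : ℚ)^2) * ∑ i, ∑ j, (if i < j then x i * x j else 0)

/-- The vector `⟨t,t+1;b⟩ ∈ ℤ^{p-1}`: the first `p-1-b` coordinates equal `t`,
the last `b` coordinates equal `t+1`. -/
def vecTB (p t b : ℕ) : Fin (p-1) → ℚ :=
  fun i => if (i : ℕ) < p - 1 - b then (t : ℚ) else (t : ℚ) + 1

lemma sq_sum_eq (n : ℕ) (x : Fin n → ℚ) :
    (∑ i, x i)^2 = ∑ i, (x i)^2
      + 2 * ∑ i, ∑ j, (if i < j then x i * x j else 0) := by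
  have h : (∑ i, x i)^2 = ∑ i, ∑ j, x i * x j := by
    rw [sq, Fintype.sum_mul_sum]
  have hdec : ∀ i j : Fin n, x i * x j =
      (if i < j then x i * x j else 0) + (if j < i then x i * x j else 0)
        + (if i = j then x i * x j else 0) := by
    intro i j
    rcases lt_trichotomy i j with h' | h' | h'
    · rw [if_pos h', if_neg h'.asymm, if_neg h'.ne]; ring
    · simp [h', lt_irrefl]
    · rw [if_neg h'.asymm, if_pos h', if_neg h'.ne']
      ring
  calc (∑ i, x i)^2 = ∑ i, ∑ j, x i * x j := h
    _ = ∑ i, ∑ j, ((if i < j then x i * x j else 0) + (if j < i then x i * x j else 0)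
        + (if i = j then x i * x j else 0)) := by
        exact Finset.sum_congr rfl fun i _ => Finset.sum_congr rfl fun j _ => hdec i j
    _ = (∑ i, ∑ j, (if i < j then x i * x j else 0))
        + (∑ i, ∑ j, (if j < i then x i * x j else 0))
        + (∑ i, ∑ j, (if i = j then x i * x j else 0)) := by
        simp [Finset.sum_add_distrib]
    _ = ∑ i, (x i)^2 + 2 * ∑ i, ∑ j, (if i < j then x i * x j else 0) := by
        have h1 : (∑ i, ∑ j, (if j < i then x i * x j else 0))
            = ∑ i, ∑ j, (if i < j then x i * x j else 0) := by
          rw [Finset.sum_comm]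
          exact Finset.sum_congr rfl fun i _ => Finset.sum_congr rfl fun j _ => by
            rcases lt_or_ge i j with h' | h'
            · rw [if_pos h', if_pos h', mul_comm]
            · rw [if_neg h'.not_gt, if_neg h'.not_gt]
        have h2 : (∑ i : Fin n, ∑ j, (if i = j then x i * x j else 0)) = ∑ i, (x i)^2 := by
          refine Finset.sum_congr rfl fun i _ => ?_
          rw [Finset.sum_ite_eq (Finset.univ) i (fun j => x i * x j)]
          simp [sq]
        rw [h1, h2]; ring

lemma Qform_eq (p : ℕ) (hp : 2 ≤ p) (x : Fin (p-1) → ℚ) :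
    Qform p x = -(∑ i, (x i)^2) + (((p:ℚ)+1)/(p:ℚ)^2) * (∑ i, x i)^2 := by
  have hp0 : (p : ℚ) ≠ 0 := by
    have : (0:ℚ) < p := by exact_mod_cast Nat.lt_of_lt_of_le (by norm_num) hp
    exact ne_of_gt this
  have hpair : ∑ i, ∑ j, (if i < j then x i * x j else 0)
      = ((∑ i, x i)^2 - ∑ i, (x i)^2) / 2 := by
    have := sq_sum_eq (p-1) x
    linarith
  rw [Qform, hpair]
  field_simp
  ring

lemma card_filter_lt (n k : ℕ) (h : k ≤ n) :
    #(univ.filter fun i : Fin n => (i:ℕ) < k) = k := by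
  have : (univ.filter fun i : Fin n => (i:ℕ) < k)
      = (univ : Finset (Fin k)).map (Fin.castLEEmb h) := by
    ext i
    simp only [mem_filter, mem_univ, true_and, mem_map]
    constructor
    · intro hi; exact ⟨⟨(i:ℕ), hi⟩, by simp⟩
    · rintro ⟨j, -, rfl⟩; exact j.2
  rw [this, card_map, card_univ, Fintype.card_fin]

lemma int_key (t : ℕ) (m : ℤ) : 0 ≤ (m - t) * (m - t - 1) ∧
    ((m - t) * (m - t - 1) = 0 ↔ m = t ∨ m = (t:ℤ) + 1) := by
  constructor
  · rcases le_or_gt m t with h | h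
    · nlinarith [h]
    · nlinarith [h]
  · constructor
    · intro h
      rcases mul_eq_zero.mp h with h | h
      · left; omega
      · right; omega
    · rintro (h | h) <;> simp [h]



lemma cardA (n b t : ℕ) (e' : Fin n → ℤ)
    (hall : ∀ i, e' i = t ∨ e' i = (t:ℤ)+1)
    (hsum : ∑ i, e' i = (n:ℤ) * t + b) (hb : b ≤ n) :
    #(univ.filter fun i => e' i = (t:ℤ)+1) = b := by
  have hsplit : ∑ i, e' i = ∑ i, (if e' i = (t:ℤ)+1 then (t:ℤ)+1 else t) := by
    refine Finset.sum_congr rfl fun i _ => ?_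
    by_cases h : e' i = (t:ℤ)+1
    · rw [if_pos h]; exact h
    · rw [if_neg h]; exact (hall i).resolve_right h
  rw [Finset.sum_ite, Finset.sum_const, Finset.sum_const] at hsplit
  have hcard := Finset.card_filter_add_card_filter_not
    (s := (univ : Finset (Fin n))) (p := fun i => e' i = (t:ℤ)+1)
  rw [card_univ, Fintype.card_fin] at hcard
  set a := #(univ.filter fun i => e' i = (t:ℤ)+1) with ha
  have h2 : #(univ.filter fun i => ¬ (e' i = (t:ℤ)+1)) = n - a := by omega
  rw [h2, hsum] at hsplit
  have hle : a ≤ n := by omega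
  have hab : (a : ℤ) = b := by
    rw [nsmul_eq_mul, nsmul_eq_mul] at hsplit
    have hc : ((n - a : ℕ) : ℤ) = (n:ℤ) - a := by
      push_cast [Nat.cast_sub hle]; ring
    rw [hc] at hsplit
    nlinarith [hsplit]
  exact_mod_cast hab

lemma perm_exists (n b t : ℕ) (e' : Fin n → ℤ)
    (hall : ∀ i, e' i = t ∨ e' i = (t:ℤ)+1)
    (hcardA : #(univ.filter fun i => e' i = (t:ℤ)+1) = b)
    (hcardB : #(univ.filter fun i : Fin n => ¬ ((i:ℕ) < n - b)) = b) :
    ∃ σ : Equiv.Perm (Fin n), ∀ i,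
      (e' i : ℚ) = (if ((σ i : ℕ)) < n - b then (t:ℚ) else (t:ℚ)+1) := by
  have hcA : Fintype.card {i : Fin n // e' i = (t:ℤ)+1} = b := by
    rw [Fintype.card_subtype]; exact hcardA
  have hcB : Fintype.card {i : Fin n // ¬ ((i:ℕ) < n - b)} = b := by
    rw [Fintype.card_subtype]; exact hcardB
  have hcA' : Fintype.card {i : Fin n // ¬ (e' i = (t:ℤ)+1)} = n - b := by
    rw [Fintype.card_subtype_compl, hcA, Fintype.card_fin]
  have hcB' : Fintype.card {i : Fin n // ¬ ¬ ((i:ℕ) < n - b)} = n - b := by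
    rw [Fintype.card_subtype_compl, hcB, Fintype.card_fin]
  let eA : {i : Fin n // e' i = (t:ℤ)+1} ≃ {i : Fin n // ¬ ((i:ℕ) < n - b)} :=
    Fintype.equivOfCardEq (by rw [hcA, hcB])
  let eC : {i : Fin n // ¬ (e' i = (t:ℤ)+1)} ≃ {i : Fin n // ¬ ¬ ((i:ℕ) < n - b)} :=
    Fintype.equivOfCardEq (by rw [hcA', hcB'])
  refine ⟨(Equiv.sumCompl _).symm.trans ((Equiv.sumCongr eA eC).trans (Equiv.sumCompl _)),
    fun i => ?_⟩
  by_cases h : e' i = (t:ℤ)+1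
  · have hσ : ((Equiv.sumCompl _).symm.trans ((Equiv.sumCongr eA eC).trans
        (Equiv.sumCompl _))) i = ((eA ⟨i, h⟩ : {i : Fin n // ¬ ((i:ℕ) < n - b)}) : Fin n) := by
      simp [Equiv.sumCompl_symm_apply_of_pos (p := fun a : Fin n => e' a = (t:ℤ)+1) h]
    rw [hσ, if_neg (eA ⟨i, h⟩).2, h]
    push_cast; ring
  · have hσ : ((Equiv.sumCompl _).symm.trans ((Equiv.sumCongr eA eC).trans
        (Equiv.sumCompl _))) i = ((eC ⟨i, h⟩ : {i : Fin n // ¬ ¬ ((i:ℕ) < n - b)}) : Fin n) := by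
      simp [Equiv.sumCompl_symm_apply_of_neg (p := fun a : Fin n => e' a = (t:ℤ)+1) h]
    have ht : e' i = t := (hall i).resolve_right h
    rw [hσ, if_pos (not_not.mp (eC ⟨i, h⟩).2), ht]
    push_cast; ring

theorem stmt_8 (p t b : ℕ) (hp : 2 ≤ p) (hb1 : 1 ≤ b) (hb2 : b ≤ p - 1)
    (e' : Fin (p-1) → ℤ)
    (hsum : ∑ i, e' i = ((p : ℤ) - 1) * t + b) :
    Qform p (fun i => (e' i : ℚ)) ≤ Qform p (vecTB p t b) ∧
    (Qform p (fun i => (e' i : ℚ)) = Qform p (vecTB p t b) ↔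
      ∃ σ : Equiv.Perm (Fin (p-1)), ∀ i, (e' i : ℚ) = vecTB p t b (σ i)) := by
  have hn1 : 1 ≤ p - 1 := by omega
  have hcastZ : ((p - 1 : ℕ) : ℤ) = (p : ℤ) - 1 := by
    push_cast [Nat.cast_sub (by omega : 1 ≤ p)]; ring
  have hcastQ : ((p - 1 : ℕ) : ℚ) = (p : ℚ) - 1 := by
    push_cast [Nat.cast_sub (by omega : 1 ≤ p)]; ring
  have hcastQ2 : ((p - 1 - b : ℕ) : ℚ) = (p : ℚ) - 1 - b := by
    push_cast [Nat.cast_sub hb2, Nat.cast_sub (by omega : 1 ≤ p)]; ring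
  -- sum of e' over ℚ
  have hS' : ∑ i, (e' i : ℚ) = ((p:ℚ) - 1) * t + b := by
    have h := congrArg (fun z : ℤ => (z : ℚ)) hsum
    push_cast at h
    convert h using 2 <;> push_cast <;> ring
  -- cards
  have hcards : #(univ.filter fun i : Fin (p-1) => (i:ℕ) < p - 1 - b) = p - 1 - b :=
    card_filter_lt _ _ (Nat.sub_le _ _)
  have hcardsum := Finset.card_filter_add_card_filter_not
      (s := (univ : Finset (Fin (p-1)))) (p := fun i : Fin (p-1) => (i:ℕ) < p - 1 - b)
  have hcardB : #(univ.filter fun i : Fin (p-1) => ¬ ((i:ℕ) < p - 1 - b)) = b := by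
    rw [card_univ, Fintype.card_fin] at hcardsum
    omega
  -- sum of vecTB
  have hSvec : ∑ i, vecTB p t b i = ((p:ℚ) - 1) * t + b := by
    unfold vecTB
    rw [Finset.sum_ite]
    rw [Finset.sum_const, Finset.sum_const, hcards, hcardB]
    rw [nsmul_eq_mul, nsmul_eq_mul, hcastQ2]
    ring
  have hSqvec : ∑ i, (vecTB p t b i)^2 = ((p:ℚ) - 1 - b) * t^2 + b * ((t:ℚ)+1)^2 := by
    unfold vecTB
    have : ∀ i : Fin (p-1),
        ((if (i:ℕ) < p - 1 - b then (t:ℚ) else (t:ℚ) + 1))^2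
          = (if (i:ℕ) < p - 1 - b then (t:ℚ)^2 else ((t:ℚ) + 1)^2) := by
      intro i; split <;> rfl
    rw [Finset.sum_congr rfl fun i _ => this i]
    rw [Finset.sum_ite]
    rw [Finset.sum_const, Finset.sum_const, hcards, hcardB]
    rw [nsmul_eq_mul, nsmul_eq_mul, hcastQ2]
  -- the defect D
  set D : ℤ := ∑ i, (e' i - t) * (e' i - t - 1) with hDdef
  have hD0 : 0 ≤ D := Finset.sum_nonneg fun i _ => (int_key t (e' i)).1
  have hDZ : D = (∑ i, (e' i)^2) - (2*(t:ℤ)+1) * (((p:ℤ)-1)*t + b)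
      + ((p:ℤ)-1) * (t*(t+1)) := by
    have h1 : D = ∑ i, ((e' i)^2 - (2*(t:ℤ)+1) * e' i + t*(t+1)) := by
      rw [hDdef]
      exact Finset.sum_congr rfl fun i _ => by ring
    rw [h1, Finset.sum_add_distrib, Finset.sum_sub_distrib, ← Finset.mul_sum, hsum,
      Finset.sum_const, card_univ, Fintype.card_fin, nsmul_eq_mul, hcastZ]
  have hDQ : (D : ℚ) = ∑ i, (e' i : ℚ)^2 - ∑ i, (vecTB p t b i)^2 := by
    rw [hSqvec]
    have : ((∑ i, (e' i)^2 : ℤ) : ℚ) = ∑ i, (e' i : ℚ)^2 := by push_cast; ring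
    rw [hDZ]
    push_cast
    ring
  -- Qform difference
  have hQdiff : Qform p (vecTB p t b) - Qform p (fun i => (e' i : ℚ)) = (D : ℚ) := by
    simp only [Qform_eq p hp]
    rw [hS', hSvec, hDQ]
    ring
  have hD0Q : (0:ℚ) ≤ (D:ℚ) := by exact_mod_cast hD0
  constructor
  · linarith
  constructor
  · intro heq
    have hD0' : D = 0 := by
      have : (D:ℚ) = 0 := by linarith [hQdiff, heq]
      exact_mod_cast this
    have hall : ∀ i : Fin (p-1), e' i = t ∨ e' i = (t:ℤ) + 1 := by
      intro i
      have hz := (Finset.sum_eq_zero_iff_of_nonneg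
        (fun i _ => (int_key t (e' i)).1)).mp hD0' i (Finset.mem_univ i)
      exact (int_key t (e' i)).2.mp hz
    have hsumn : ∑ i, e' i = ((p-1:ℕ):ℤ) * t + b := by rw [hcastZ]; exact hsum
    have hcardA := cardA (p-1) b t e' hall hsumn hb2
    exact perm_exists (p-1) b t e' hall hcardA hcardB
  · rintro ⟨σ, hσ⟩
    simp only [Qform_eq p hp]
    have h1 : ∑ i, (e' i : ℚ)^2 = ∑ i, (vecTB p t b i)^2 := by
      calc ∑ i, (e' i : ℚ)^2 = ∑ i, (vecTB p t b (σ i))^2 :=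
            Finset.sum_congr rfl fun i _ => by rw [hσ i]
        _ = ∑ i, (vecTB p t b i)^2 := Equiv.sum_comp σ (fun i => (vecTB p t b i)^2)
    have h2 : ∑ i, (e' i : ℚ) = ∑ i, vecTB p t b i := by
      calc ∑ i, (e' i : ℚ) = ∑ i, vecTB p t b (σ i) :=
            Finset.sum_congr rfl fun i _ => hσ i
        _ = ∑ i, vecTB p t b i := Equiv.sum_comp σ (vecTB p t b)
    rw [h1, h2]
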